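/- Greedy exchange lemma for disjoint chains of solutions: Let L be a lattice of feasible solutions (r-tuples over disjoint chains, componentwise order) and suppose (X₁,…,X_k) is the sequence produced by iteratively taking the minimum solution, then the minimum among solutions disjoint from and above the current one, stopping when the current solution intersects the top element. Then k is the maximum possible length of a strictly increasing sequence of pairwise disjoint feasible solutions: for any chain Y₁ < Y₂ < … < Y_ℓ of pairwise disjoint feasible solutions, ℓ ≤ k. -/
import Mathlib


/-- Two solutions are disjoint if they differ in every coordinate. -/
def SolDisjoint {r : ℕ} {E : Fin r → Type*} (X Y : ∀ ℓ, E ℓ) : Prop :=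
  ∀ ℓ : Fin r, X ℓ ≠ Y ℓ

theorem greedy_disjoint_solutions_maximum {r : ℕ} {E : Fin r → Type*}
    [∀ ℓ, LinearOrder (E ℓ)]
    (Γ : Set (∀ ℓ, E ℓ))
    (hclosed : ∀ X ∈ Γ, ∀ Y ∈ Γ, X ⊓ Y ∈ Γ ∧ X ⊔ Y ∈ Γ)
    (Z : ∀ ℓ, E ℓ) (hZ : Z ∈ Γ) (htop : ∀ Y ∈ Γ, Y ≤ Z)
    (k : ℕ) (hk : 1 ≤ k) (X : ℕ → ∀ ℓ, E ℓ)
    (hbot : X 0 ∈ Γ ∧ ∀ Y ∈ Γ, X 0 ≤ Y)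
    (hstep : ∀ i, i + 1 < k →
      X (i + 1) ∈ Γ ∧ SolDisjoint (X i) (X (i + 1)) ∧ X i ≤ X (i + 1) ∧
      ∀ Y ∈ Γ, SolDisjoint (X i) Y → X i ≤ Y → X (i + 1) ≤ Y)
    (hcont : ∀ i, i + 1 < k → SolDisjoint (X i) Z)
    (hstop : ¬ SolDisjoint (X (k - 1)) Z) :
    ∀ (l : ℕ) (Y : ℕ → ∀ ℓ, E ℓ),
      (∀ m, m < l → Y m ∈ Γ) →
      (∀ m m', m < m' → m' < l → Y m < Y m' ∧ SolDisjoint (Y m) (Y m')) →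
      l ≤ k := by
  intro l Y hYΓ hchain
  by_contra hlk
  push_neg at hlk
  have hYs : ∀ m m' (ℓ : Fin r), m < m' → m' < l → Y m ℓ < Y m' ℓ := by
    intro m m' ℓ h h'
    exact lt_of_le_of_ne ((hchain m m' h h').1.le ℓ) ((hchain m m' h h').2 ℓ)
  have claim : ∀ i, i < k → ∀ j, i ≤ j → j < l → X i ≤ Y j := by
    intro i
    induction i with
    | zero => intro _ j _ hj; exact hbot.2 (Y j) (hYΓ j hj)
    | succ i ih =>
      intro hik j hij hjl
      have hik' : i < k := Nat.lt_of_succ_lt hik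
      have hprev : X i ≤ Y (j - 1) := ih hik' (j - 1) (by omega) (by omega)
      have hdis : SolDisjoint (X i) (Y j) := by
        intro ℓ
        exact ne_of_lt (lt_of_le_of_lt (hprev ℓ) (hYs (j - 1) j ℓ (by omega) hjl))
      have hle : X i ≤ Y j :=
        le_trans hprev (fun ℓ => (hYs (j - 1) j ℓ (by omega) hjl).le)
      exact (hstep i hik).2.2.2 (Y j) (hYΓ j hjl) hdis hle
  have hk1 : k - 1 < k := by omega
  have hA : X (k - 1) ≤ Y (l - 1) := claim (k - 1) hk1 (l - 1) (by omega) (by omega)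
  have hB : X (k - 1) ≤ Y (l - 2) := claim (k - 1) hk1 (l - 2) (by omega) (by omega)
  rw [SolDisjoint] at hstop
  push_neg at hstop
  obtain ⟨ℓ₀, hℓ₀⟩ := hstop
  have hZY : Y (l - 1) ℓ₀ ≤ Z ℓ₀ := htop (Y (l - 1)) (hYΓ (l - 1) (by omega)) ℓ₀
  have heq : Y (l - 1) ℓ₀ = X (k - 1) ℓ₀ :=
    le_antisymm (hZY.trans_eq hℓ₀.symm) (hA ℓ₀)
  have hlt : Y (l - 2) ℓ₀ < Y (l - 1) ℓ₀ := hYs (l - 2) (l - 1) ℓ₀ (by omega) (by omega)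
  exact lt_irrefl _ (lt_of_le_of_lt (hB ℓ₀) (heq ▸ hlt))
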